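/- Let d ≥ 2, let μ be the uniform probability measure on the unit sphere of the Euclidean space ℝ^d, and let u, v be unit vectors in ℝ^d. Define sign(s) = 1 if s ≥ 0 and sign(s) = −1 otherwise. Then μ({r on the unit sphere : sign(⟨r,u⟩) ≠ sign(⟨r,v⟩)}) = arccos(⟨u,v⟩) / π. -/

import Mathlib

open MeasureTheory Metric
open scoped RealInnerProductSpace

/-- `sgn s = 1` if `s ≥ 0` and `-1` otherwise. -/
noncomputable def sgn (s : ℝ) : ℝ := if 0 ≤ s then 1 else -1

namespace GW
set_option maxHeartbeats 1000000

variable {d : ℕ}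

abbrev E (d : ℕ) := EuclideanSpace ℝ (Fin d)
abbrev S (d : ℕ) := Metric.sphere (0 : E d) 1

/-- The map on the sphere induced by a linear isometry equiv. -/
noncomputable def rotS (f : E d ≃ₗᵢ[ℝ] E d) (x : S d) : S d :=
  ⟨f x, mem_sphere_zero_iff_norm.mpr (by rw [f.norm_map]; exact mem_sphere_zero_iff_norm.mp x.2)⟩

lemma rotS_cont (f : E d ≃ₗᵢ[ℝ] E d) : Continuous (rotS f) :=
  Continuous.subtype_mk (f.continuous.comp continuous_subtype_val) _

lemma minner (x : E d) : Measurable (fun r : S d => ⟪(r : E d), x⟫) :=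
  (Continuous.inner continuous_subtype_val continuous_const).measurable

/-- Extend an orthonormal family to an orthonormal basis. -/
lemma exists_onb_extending {k : ℕ} (hk : k ≤ d) (v : Fin k → E d) (hv : Orthonormal ℝ v) :
    ∃ b : OrthonormalBasis (Fin d) ℝ (E d), ∀ i : Fin k, b (Fin.castLE hk i) = v i := by
  classical
  have hcard : Module.finrank ℝ (E d) = Fintype.card (Fin d) := by
    simp [finrank_euclideanSpace_fin]
  set s : Set (Fin d) := {i | (i : ℕ) < k} with hs
  have hres : Orthonormal ℝ (s.restrict (fun i : Fin d =>
      if h : (i : ℕ) < k then v ⟨i, h⟩ else 0)) := by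
    rw [orthonormal_iff_ite]
    rintro ⟨i, hi⟩ ⟨j, hj⟩
    simp only [Set.restrict, Set.domRestrict_apply]
    have hi' : (i : ℕ) < k := hi
    have hj' : (j : ℕ) < k := hj
    rw [dif_pos hi', dif_pos hj']
    have := (orthonormal_iff_ite.mp hv) ⟨i, hi'⟩ ⟨j, hj'⟩
    rw [this]
    congr 1
    simp [Fin.ext_iff, Subtype.ext_iff]
  obtain ⟨b, hb⟩ := hres.exists_orthonormalBasis_extension_of_card_eq hcard
  refine ⟨b, fun i => ?_⟩
  have hmem : (Fin.castLE hk i : Fin d) ∈ s := i.2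
  have h2 := hb _ hmem
  rw [h2, dif_pos (show ((Fin.castLE hk i : Fin d) : ℕ) < k from i.2)]
  exact congrArg v (Fin.ext rfl)

/-- Transport an orthonormal family to another by a linear isometry. -/
lemma exists_isometry_map_family {k : ℕ} (hk : k ≤ d) (v w : Fin k → E d)
    (hv : Orthonormal ℝ v) (hw : Orthonormal ℝ w) :
    ∃ f : E d ≃ₗᵢ[ℝ] E d, ∀ i, f (v i) = w i := by
  classical
  obtain ⟨bv, hbv⟩ := exists_onb_extending hk v hv
  obtain ⟨bw, hbw⟩ := exists_onb_extending hk w hw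
  refine ⟨bv.repr.trans bw.repr.symm, fun i => ?_⟩
  rw [← hbv i, ← hbw i]
  simp only [LinearIsometryEquiv.trans_apply, OrthonormalBasis.repr_self,
    OrthonormalBasis.repr_symm_single]

variable (μ : Measure (S d)) [IsProbabilityMeasure μ]
variable (hinv : ∀ f : E d ≃ₗᵢ[ℝ] E d, Measure.map (rotS f) μ = μ)

include hinv in
/-- Invariance of sets defined via inner products with finitely many vectors. -/
lemma inv_n {k : ℕ} (f : E d ≃ₗᵢ[ℝ] E d) (P : (Fin k → ℝ) → Prop)
    (hP : MeasurableSet {p : Fin k → ℝ | P p}) (x : Fin k → E d) :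
    μ {r : S d | P (fun i => ⟪(r : E d), f (x i)⟫)}
      = μ {r : S d | P (fun i => ⟪(r : E d), x i⟫)} := by
  have hmeas : ∀ y : Fin k → E d, MeasurableSet {r : S d | P (fun i => ⟪(r : E d), y i⟫)} := by
    intro y
    have : Measurable (fun r : S d => (fun i => ⟪(r : E d), y i⟫)) :=
      measurable_pi_lambda _ (fun i => minner (y i))
    exact this hP
  have hpre : rotS f ⁻¹' {r : S d | P (fun i => ⟪(r : E d), f (x i)⟫)}
      = {r : S d | P (fun i => ⟪(r : E d), x i⟫)} := by
    ext r
    simp only [Set.mem_preimage, Set.mem_setOf_eq, rotS]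
    have hkey : (fun i => ⟪(f (r : E d)), f (x i)⟫) = fun i => ⟪(r : E d), x i⟫ := by
      funext i; exact f.inner_map_map _ _
    rw [hkey]
  calc μ {r : S d | P (fun i => ⟪(r : E d), f (x i)⟫)}
      = (Measure.map (rotS f) μ) {r : S d | P (fun i => ⟪(r : E d), f (x i)⟫)} := by
        rw [hinv f]
    _ = μ (rotS f ⁻¹' {r : S d | P (fun i => ⟪(r : E d), f (x i)⟫)}) := by
        rw [Measure.map_apply (rotS_cont f).measurable (hmeas _)]
    _ = μ {r : S d | P (fun i => ⟪(r : E d), x i⟫)} := by rw [hpre]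
/-- Unit circle curve in the plane spanned by `a`, `b`. -/
noncomputable def cv (a b : E d) (t : ℝ) : E d := Real.cos t • a + Real.sin t • b

lemma cv_zero (a b : E d) : cv a b 0 = a := by simp [cv]

lemma inner_cv {a b : E d} (ha : ‖a‖ = 1) (hb : ‖b‖ = 1) (hab : ⟪a, b⟫ = 0) (s t : ℝ) :
    ⟪cv a b s, cv a b t⟫ = Real.cos (t - s) := by
  have haa : ⟪a, a⟫ = 1 := by
    rw [real_inner_self_eq_norm_mul_norm, ha]; ring
  have hbb : ⟪b, b⟫ = 1 := by
    rw [real_inner_self_eq_norm_mul_norm, hb]; ring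
  have hba : ⟪b, a⟫ = 0 := by rw [real_inner_comm]; exact hab
  simp only [cv, inner_add_add_self, inner_add_left, inner_add_right, real_inner_smul_left,
    real_inner_smul_right, haa, hbb, hab, hba, Real.cos_sub]
  ring

lemma norm_cv {a b : E d} (ha : ‖a‖ = 1) (hb : ‖b‖ = 1) (hab : ⟪a, b⟫ = 0) (t : ℝ) :
    ‖cv a b t‖ = 1 := by
  have h := inner_cv ha hb hab t t
  rw [real_inner_self_eq_norm_mul_norm, sub_self, Real.cos_zero] at h
  nlinarith [norm_nonneg (cv a b t)]

lemma cv_add (a b : E d) (s t : ℝ) :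
    cv a b (s + t) = Real.cos t • cv a b s + Real.sin t • cv a b (s + Real.pi / 2) := by
  simp only [cv, Real.cos_add, Real.sin_add, Real.cos_pi_div_two, Real.sin_pi_div_two]
  module

lemma cv_pi (a b : E d) : cv a b Real.pi = -a := by simp [cv]

lemma cv_neg (a b : E d) (t : ℝ) : cv a (-b) t = cv a b (-t) := by
  simp [cv, smul_neg]

lemma cv_identity1 (a b : E d) (β γ : ℝ) :
    Real.sin β • cv a b γ = Real.sin γ • cv a b β - Real.sin (γ - β) • a := by
  simp only [cv, Real.sin_sub]
  module

lemma cv_identity2 (a b : E d) (β γ : ℝ) :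
    Real.sin (γ - β) • a = Real.sin γ • cv a b β - Real.sin β • cv a b γ := by
  simp only [cv, Real.sin_sub]
  module

lemma cv_orthonormal_pair {a b : E d} (ha : ‖a‖ = 1) (hb : ‖b‖ = 1) (hab : ⟪a, b⟫ = 0) (s : ℝ) :
    Orthonormal ℝ ![cv a b s, cv a b (s + Real.pi / 2)] := by
  rw [orthonormal_iff_ite]
  intro i j
  fin_cases i <;> fin_cases j <;>
    simp [inner_cv ha hb hab, Real.cos_pi_div_two, real_inner_self_eq_norm_mul_norm,
      norm_cv ha hb hab] <;>
    norm_num [inner_cv ha hb hab, show s - (s + Real.pi/2) = -(Real.pi/2) by ring,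
      Real.cos_pi_div_two]


/-- Orthonormal pair mapping respecting the circle curve. -/
lemma exists_map_cv (hd : 2 ≤ d) {a b a' b' : E d}
    (ha : ‖a‖ = 1) (hb : ‖b‖ = 1) (hab : ⟪a, b⟫ = 0)
    (ha' : ‖a'‖ = 1) (hb' : ‖b'‖ = 1) (hab' : ⟪a', b'⟫ = 0) :
    ∃ f : E d ≃ₗᵢ[ℝ] E d, ∀ t, f (cv a b t) = cv a' b' t := by
  have hON : ∀ {x y : E d}, ‖x‖ = 1 → ‖y‖ = 1 → ⟪x, y⟫ = 0 → Orthonormal ℝ ![x, y] := by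
    intro x y hx hy hxy
    rw [orthonormal_iff_ite]
    intro i j
    have hyx : ⟪y, x⟫ = 0 := by rw [real_inner_comm]; exact hxy
    have hxx : ⟪x, x⟫ = (1 : ℝ) := by rw [real_inner_self_eq_norm_mul_norm, hx]; ring
    have hyy : ⟪y, y⟫ = (1 : ℝ) := by rw [real_inner_self_eq_norm_mul_norm, hy]; ring
    fin_cases i <;> fin_cases j <;> simp [hxx, hyy, hxy, hyx, hx, hy]
  obtain ⟨f, hf⟩ := exists_isometry_map_family hd ![a, b] ![a', b']
    (hON ha hb hab) (hON ha' hb' hab')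
  refine ⟨f, fun t => ?_⟩
  have h0 := hf 0
  have h1 := hf 1
  simp only [Matrix.cons_val_zero, Matrix.cons_val_one, Matrix.head_cons] at h0 h1
  simp only [cv, map_add, LinearIsometryEquiv.map_smul, h0, h1]

section Null

lemma measurable_zero_set {k : ℕ} (v : Fin k → E d) :
    MeasurableSet {r : S d | ∀ i, ⟪(r : E d), v i⟫ = 0} := by
  have : {r : S d | ∀ i, ⟪(r : E d), v i⟫ = 0}
      = ⋂ i, {r : S d | ⟪(r : E d), v i⟫ = 0} := by
    ext r; simp
  rw [this]
  exact MeasurableSet.iInter fun i => (minner (v i)) (measurableSet_singleton 0)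

include hinv in
lemma null_inter : ∀ j k : ℕ, k + j = d → 1 ≤ k → ∀ v : Fin k → E d, Orthonormal ℝ v →
    μ {r : S d | ∀ i, ⟪(r : E d), v i⟫ = 0} = 0 := by
  intro j
  induction j with
  | zero =>
    intro k hkd _ v hv
    have hcard : Module.finrank ℝ (E d) = Fintype.card (Fin k) := by
      simp [finrank_euclideanSpace_fin]
      omega
    have hres : Orthonormal ℝ ((Set.univ : Set (Fin k)).restrict v) :=
      hv.comp _ (Subtype.val_injective)
    obtain ⟨b, hb⟩ := hres.exists_orthonormalBasis_extension_of_card_eq hcard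
    have hbv : ∀ i, b i = v i := fun i => hb i (Set.mem_univ i)
    convert measure_empty (μ := μ)
    ext r
    simp only [Set.mem_setOf_eq, Set.mem_empty_iff_false, iff_false]
    intro h
    have hr0 : (r : E d) = 0 := by
      have : b.repr (r : E d) = 0 := by
        ext i
        rw [b.repr_apply_apply, real_inner_comm, hbv i]
        exact h i
      have := congrArg b.repr.symm this
      simpa using this
    have := r.2
    rw [mem_sphere_zero_iff_norm, hr0] at this
    simp at this
  | succ j ih =>
    intro k hkd hk1 v hv
    have hkd' : k < d := by omega
    have hk0 : (0 : ℕ) < k := hk1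
    -- extend with an orthogonal unit vector w
    obtain ⟨b, hb⟩ := exists_onb_extending (le_of_lt hkd') v hv
    set w : E d := b ⟨k, hkd'⟩ with hwdef
    have hw1 : ‖w‖ = 1 := b.orthonormal.1 _
    have hw2 : ∀ i : Fin k, ⟪v i, w⟫ = 0 := by
      intro i
      rw [← hb i]
      exact b.orthonormal.2 (by simp [Fin.ext_iff]; omega)
    have hva : ‖v ⟨0, hk0⟩‖ = 1 := hv.1 _
    set θ : ℕ → ℝ := fun n => Real.pi / (2 * (n + 2)) with hθdef
    have hθpos : ∀ n, 0 < θ n := fun n => by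
      apply div_pos Real.pi_pos; positivity
    have hθlt : ∀ n, θ n < Real.pi / 2 := by
      intro n
      have hd1 : (0:ℝ) < 2 * ((n:ℝ) + 2) := by positivity
      rw [hθdef, div_lt_div_iff₀ hd1 (by norm_num : (0:ℝ) < 2)]
      have : (0 : ℝ) ≤ (n : ℝ) := Nat.cast_nonneg n
      nlinarith [Real.pi_pos]
    have hθinj : Function.Injective θ := by
      intro n m h
      rw [hθdef] at h
      rw [div_eq_div_iff (by positivity : (0:ℝ) < 2*((n:ℝ)+2)).ne'
        (by positivity : (0:ℝ) < 2*((m:ℝ)+2)).ne'] at h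
      have h2 : ((n : ℝ)) = m := by nlinarith [Real.pi_pos, Real.pi_ne_zero]
      exact_mod_cast h2
    set V : ℝ → Fin k → E d := fun t i =>
      if (i : ℕ) = 0 then cv (v ⟨0, hk0⟩) w t else v i with hVdef
    have hcvon : ∀ (t : ℝ) (i : Fin k), (i : ℕ) ≠ 0 → ⟪cv (v ⟨0, hk0⟩) w t, v i⟫ = 0 := by
      intro t i hi
      have h1 : ⟪v ⟨0, hk0⟩, v i⟫ = 0 := by
        rw [orthonormal_iff_ite.mp hv ⟨0, hk0⟩ i, if_neg]
        simp [Fin.ext_iff]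
        omega
      have h2 : ⟪w, v i⟫ = 0 := by rw [real_inner_comm]; exact hw2 i
      simp only [cv, inner_add_left, real_inner_smul_left, h1, h2]
      ring
    have hVon : ∀ t, Orthonormal ℝ (V t) := by
      intro t
      rw [orthonormal_iff_ite]
      intro i j
      by_cases hi : (i : ℕ) = 0 <;> by_cases hj : (j : ℕ) = 0
      · have hij : i = j := by rw [Fin.ext_iff, hi, hj]
        simp only [hVdef, if_pos hi, if_pos hj, if_pos hij]
        rw [inner_cv hva hw1 (hw2 _), sub_self, Real.cos_zero]
      · have hij : i ≠ j := by simp [Fin.ext_iff]; omega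
        simp only [hVdef, if_pos hi, if_neg hj, if_neg hij]
        exact hcvon t j hj
      · have hij : i ≠ j := by simp [Fin.ext_iff]; omega
        simp only [hVdef, if_neg hi, if_pos hj, if_neg hij]
        rw [real_inner_comm]
        exact hcvon t i hi
      · simp only [hVdef, if_neg hi, if_neg hj]
        exact orthonormal_iff_ite.mp hv i j
    set M : ℝ → Set (S d) := fun t => {r : S d | ∀ i, ⟪(r : E d), V t i⟫ = 0} with hMdef
    have hMmeas : ∀ t, MeasurableSet (M t) := fun t => measurable_zero_set (V t)
    have hMeq : ∀ s t : ℝ, μ (M s) = μ (M t) := by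
      intro s t
      obtain ⟨f, hf⟩ := exists_isometry_map_family (le_of_lt hkd') (V s) (V t)
        (hVon s) (hVon t)
      have hP : MeasurableSet {p : Fin k → ℝ | ∀ i, p i = 0} := by
        have : {p : Fin k → ℝ | ∀ i, p i = 0} = ⋂ i, {p : Fin k → ℝ | p i = 0} := by
          ext p; simp
        rw [this]
        exact MeasurableSet.iInter fun i =>
          (measurable_pi_apply i) (measurableSet_singleton 0)
      have := inv_n μ hinv f (fun p => ∀ i, p i = 0) hP (V s)
      simp only [hf] at this
      exact this.symm
    -- pairwise intersections are null
    have hInter : ∀ n m : ℕ, n ≠ m → μ (M (θ n) ∩ M (θ m)) = 0 := by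
      intro n m hnm
      set vext : Fin (k + 1) → E d := fun i =>
        if h : (i : ℕ) < k then v ⟨i, h⟩ else w with hvextdef
      have hvexton : Orthonormal ℝ vext := by
        rw [orthonormal_iff_ite]
        intro i j
        by_cases hi : (i : ℕ) < k <;> by_cases hj : (j : ℕ) < k
        · simp only [hvextdef, dif_pos hi, dif_pos hj]
          rw [orthonormal_iff_ite.mp hv ⟨i, hi⟩ ⟨j, hj⟩]
          congr 1
          simp [Fin.ext_iff]
        · have hij : i ≠ j := by simp [Fin.ext_iff]; omega
          simp only [hvextdef, dif_pos hi, dif_neg hj, if_neg hij]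
          exact hw2 _
        · have hij : i ≠ j := by simp [Fin.ext_iff]; omega
          simp only [hvextdef, dif_neg hi, dif_pos hj, if_neg hij]
          rw [real_inner_comm]
          exact hw2 _
        · have hij : i = j := by
            rw [Fin.ext_iff]
            omega
          simp only [hvextdef, dif_neg hi, dif_neg hj, if_pos hij]
          rw [real_inner_self_eq_norm_mul_norm, hw1]
          ring
      have hnull := ih (k + 1) (by omega) (by omega) vext hvexton
      refine measure_mono_null ?_ hnull
      rintro r ⟨h1, h2⟩
      -- extract the two equations at index 0
      have e1 := h1 ⟨0, hk0⟩
      have e2 := h2 ⟨0, hk0⟩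
      simp only [hMdef, hVdef, Set.mem_setOf_eq, if_true, eq_self_iff_true] at e1 e2
      set x : ℝ := ⟪(r : E d), v ⟨0, hk0⟩⟫ with hx
      set y : ℝ := ⟪(r : E d), w⟫ with hy
      have ecv : ∀ t : ℝ, ⟪(r : E d), cv (v ⟨0, hk0⟩) w t⟫
          = Real.cos t * x + Real.sin t * y := by
        intro t
        simp only [cv, inner_add_right, real_inner_smul_right, hx, hy]
      rw [ecv] at e1 e2
      have hsin : Real.sin (θ m - θ n) ≠ 0 := by
        have h1' := hθpos n; have h2' := hθpos m
        have h3 := hθlt n; have h4 := hθlt m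
        have hne : θ m - θ n ≠ 0 := by
          intro h
          exact hnm (hθinj (by linarith)).symm
        intro hcontra
        rw [Real.sin_eq_zero_iff_of_lt_of_lt (by linarith [Real.pi_pos])
          (by linarith [Real.pi_pos])] at hcontra
        exact hne hcontra
      have hx0 : x = 0 := by
        have hxs : x * Real.sin (θ m - θ n) = 0 := by
          rw [Real.sin_sub]
          linear_combination Real.sin (θ m) * e1 - Real.sin (θ n) * e2
        exact (mul_eq_zero.mp hxs).resolve_right hsin
      have hy0 : y = 0 := by
        have hys : y * Real.sin (θ m - θ n) = 0 := by
          rw [Real.sin_sub]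
          linear_combination Real.cos (θ n) * e2 - Real.cos (θ m) * e1
        exact (mul_eq_zero.mp hys).resolve_right hsin
      intro i
      by_cases hik : (i : ℕ) < k
      · simp only [hvextdef, dif_pos hik]
        by_cases hi0 : (i : ℕ) = 0
        · have : (⟨(i : ℕ), hik⟩ : Fin k) = ⟨0, hk0⟩ := by simp [Fin.ext_iff, hi0]
          rw [this]
          exact hx0
        · have := h1 ⟨(i : ℕ), hik⟩
          simp only [hMdef, hVdef, Set.mem_setOf_eq] at this
          rw [if_neg hi0] at this
          exact this
      · simp only [hvextdef, dif_neg hik]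
        exact hy0
    -- countably many disjoint copies of equal measure
    set B : ℕ → Set (S d) := fun n => M (θ n) \ ⋃ (m : ℕ) (_ : m < n), M (θ m) with hBdef
    have hBmeas : ∀ n, MeasurableSet (B n) :=
      fun n => (hMmeas _).diff (MeasurableSet.biUnion (Set.to_countable _)
        (fun m _ => hMmeas _))
    have hBdisj : Pairwise (Function.onFun Disjoint B) := by
      intro n m hnm
      rcases lt_or_gt_of_ne hnm with h | h
      · refine Set.disjoint_left.mpr ?_
        rintro r ⟨hr1, _⟩ ⟨_, hr2⟩
        exact hr2 (Set.mem_biUnion h hr1)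
      · refine Set.disjoint_left.mpr ?_
        rintro r ⟨_, hr2⟩ ⟨hr1, _⟩
        exact hr2 (Set.mem_biUnion h hr1)
    have hBe : ∀ n, μ (B n) = μ (M (θ 0)) := by
      intro n
      have hnull : μ (M (θ n) ∩ ⋃ (m : ℕ) (_ : m < n), M (θ m)) = 0 := by
        rw [Set.inter_iUnion₂]
        exact (measure_biUnion_null_iff (Set.to_countable _)).mpr
          (fun m hm => hInter n m (Nat.ne_of_lt hm).symm)
      rw [hBdef]
      rw [measure_diff_null' hnull]
      exact hMeq (θ n) (θ 0)
    have hsum := measure_iUnion hBdisj hBmeas (μ := μ)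
    have hle : μ (⋃ n, B n) ≤ 1 := by
      calc μ (⋃ n, B n) ≤ μ Set.univ := measure_mono (Set.subset_univ _)
        _ = 1 := measure_univ
    rw [hsum] at hle
    simp only [hBe] at hle
    have hm0 : μ (M (θ 0)) = 0 := by
      by_contra hne
      rw [ENNReal.tsum_const_eq_top_of_ne_zero hne] at hle
      exact (by norm_num : ¬ ((⊤ : ENNReal) ≤ 1)) hle
    have hM0 : μ (M 0) = 0 := by rw [hMeq 0 (θ 0)]; exact hm0
    have hV0 : V 0 = v := by
      funext i
      by_cases hi : (i : ℕ) = 0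
      · simp only [hVdef, if_pos hi, cv_zero]
        exact congrArg v (Fin.ext hi.symm)
      · simp only [hVdef, if_neg hi]
    have hfinal : M 0 = {r : S d | ∀ i, ⟪(r : E d), v i⟫ = 0} := by
      simp only [hMdef, hV0]
    rw [← hfinal]
    exact hM0

include hinv in
lemma null_hyperplane (hd1 : 1 ≤ d) {a : E d} (ha : ‖a‖ = 1) :
    μ {r : S d | ⟪(r : E d), a⟫ = 0} = 0 := by
  have hON : Orthonormal ℝ (fun _ : Fin 1 => a) := by
    rw [orthonormal_iff_ite]
    intro i j
    have haa : ⟪a, a⟫ = (1 : ℝ) := by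
      rw [real_inner_self_eq_norm_mul_norm, ha]; ring
    fin_cases i; fin_cases j
    simp [haa, ha]
  have h := null_inter μ hinv (d - 1) 1 (by omega) le_rfl (fun _ => a) hON
  convert h using 2
  ext r
  simp [Fin.forall_fin_one]

include hinv in
lemma inv_pair (f : E d ≃ₗᵢ[ℝ] E d) (x y : E d) :
    μ {r : S d | 0 ≤ ⟪(r : E d), f x⟫ ∧ ⟪(r : E d), f y⟫ < 0}
      = μ {r : S d | 0 ≤ ⟪(r : E d), x⟫ ∧ ⟪(r : E d), y⟫ < 0} := by
  have hP : MeasurableSet {p : Fin 2 → ℝ | 0 ≤ p 0 ∧ p 1 < 0} :=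
    ((measurable_pi_apply 0) measurableSet_Ici).inter
      ((measurable_pi_apply 1) measurableSet_Iio)
  have h := inv_n μ hinv f (fun p => 0 ≤ p 0 ∧ p 1 < 0) hP ![x, y]
  simpa using h

include hinv in
lemma inv_pos (f : E d ≃ₗᵢ[ℝ] E d) (x : E d) :
    μ {r : S d | 0 < ⟪(r : E d), f x⟫} = μ {r : S d | 0 < ⟪(r : E d), x⟫} := by
  have hP : MeasurableSet {p : Fin 1 → ℝ | 0 < p 0} :=
    (measurable_pi_apply 0) measurableSet_Ioi
  have h := inv_n μ hinv f (fun p => 0 < p 0) hP (fun _ => x)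
  simpa using h

section Wedge

variable {a b : E d}

/-- The wedge between directions `s` and `t`. -/
def K (a b : E d) (s t : ℝ) : Set (S d) :=
  {r : S d | 0 ≤ ⟪(r : E d), cv a b s⟫ ∧ ⟪(r : E d), cv a b t⟫ < 0}

lemma K_meas (a b : E d) (s t : ℝ) : MeasurableSet (K a b s t) :=
  ((minner (cv a b s)) measurableSet_Ici).inter ((minner (cv a b t)) measurableSet_Iio)

include hinv in
lemma K_rot (hd : 2 ≤ d) (ha : ‖a‖ = 1) (hb : ‖b‖ = 1) (hab : ⟪a, b⟫ = 0) (s t : ℝ) :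
    μ (K a b s t) = μ (K a b 0 (t - s)) := by
  have hps : ⟪cv a b s, cv a b (s + Real.pi / 2)⟫ = 0 := by
    rw [inner_cv ha hb hab]
    simp [Real.cos_pi_div_two]
  obtain ⟨f, hf⟩ := exists_map_cv hd ha hb hab (norm_cv ha hb hab s)
    (norm_cv ha hb hab (s + Real.pi / 2)) hps
  have hfc : ∀ x : ℝ, f (cv a b x) = cv a b (s + x) := by
    intro x
    rw [hf x]
    exact (cv_add a b s x).symm
  have h := inv_pair μ hinv f (cv a b 0) (cv a b (t - s))
  rw [hfc 0, hfc (t - s), add_zero, show s + (t - s) = t by ring] at h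
  exact h

include hinv in
lemma K_refl (hd : 2 ≤ d) (ha : ‖a‖ = 1) (hb : ‖b‖ = 1) (hab : ⟪a, b⟫ = 0) (t : ℝ) :
    μ (K a b 0 (-t)) = μ (K a b 0 t) := by
  obtain ⟨f, hf⟩ := exists_map_cv hd ha hb hab ha (by rw [norm_neg]; exact hb)
    (by rw [inner_neg_right, hab, neg_zero])
  have hfc : ∀ x : ℝ, f (cv a b x) = cv a b (-x) := by
    intro x
    rw [hf x, cv_neg]
  have h := inv_pair μ hinv f (cv a b 0) (cv a b t)
  rw [hfc 0, hfc t, neg_zero] at h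
  exact h

include hinv in
lemma measure_wedge (hd : 2 ≤ d) (ha : ‖a‖ = 1) (hb : ‖b‖ = 1) (hab : ⟪a, b⟫ = 0)
    {θ : ℝ} (h0 : 0 ≤ θ) (hπ : θ ≤ Real.pi) :
    μ (K a b 0 θ) = ENNReal.ofReal (θ / (2 * Real.pi)) := by
  have hpi := Real.pi_pos
  have hN : μ {r : S d | ⟪(r : E d), a⟫ = 0} = 0 :=
    null_hyperplane μ hinv (by omega) ha
  have hfin : ∀ s : Set (S d), μ s ≠ ⊤ := fun s => measure_ne_top μ s
  -- inclusion (i)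
  have incl1 : ∀ β γ : ℝ, 0 < β → β < γ → γ ≤ Real.pi →
      (K a b 0 β \ {r : S d | ⟪(r : E d), a⟫ = 0}) ⊆ K a b 0 γ := by
    intro β γ hβ hβγ hγ
    rintro r ⟨⟨h1, h2⟩, h3⟩
    rw [cv_zero] at h1
    simp only [Set.mem_setOf_eq] at h3
    have hx0 : 0 < ⟪(r : E d), a⟫ := lt_of_le_of_ne h1 (Ne.symm h3)
    have hid := congrArg (fun z => ⟪(r : E d), z⟫) (cv_identity1 a b β γ)
    simp only [inner_smul_right, inner_sub_right] at hid
    have hsβ : 0 < Real.sin β := Real.sin_pos_of_pos_of_lt_pi hβ (by linarith)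
    have hsγ : 0 ≤ Real.sin γ := Real.sin_nonneg_of_nonneg_of_le_pi (by linarith) hγ
    have hsγβ : 0 < Real.sin (γ - β) :=
      Real.sin_pos_of_pos_of_lt_pi (by linarith) (by linarith)
    constructor
    · rw [cv_zero]; exact h1
    · nlinarith [hid]
  -- inclusion (ii)
  have incl2 : ∀ β γ : ℝ, 0 < β → β < γ → γ ≤ Real.pi →
      K a b β γ ⊆ K a b 0 γ := by
    intro β γ hβ hβγ hγ
    rintro r ⟨h1, h2⟩
    refine ⟨?_, h2⟩
    rw [cv_zero]
    have hid := congrArg (fun z => ⟪(r : E d), z⟫) (cv_identity2 a b β γ)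
    simp only [inner_smul_right, inner_sub_right] at hid
    have hsβ : 0 < Real.sin β := Real.sin_pos_of_pos_of_lt_pi hβ (by linarith)
    have hsγ : 0 ≤ Real.sin γ := Real.sin_nonneg_of_nonneg_of_le_pi (by linarith) hγ
    have hsγβ : 0 < Real.sin (γ - β) :=
      Real.sin_pos_of_pos_of_lt_pi (by linarith) (by linarith)
    nlinarith [hid]
  -- exact additivity
  have hadd : ∀ β γ : ℝ, 0 < β → β < γ → γ ≤ Real.pi →
      μ (K a b 0 γ) = μ (K a b 0 β) + μ (K a b β γ) := by
    intro β γ hβ hβγ hγ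
    have hsub : K a b 0 γ ⊆ K a b 0 β ∪ K a b β γ := by
      rintro r ⟨h1, h2⟩
      by_cases hβ' : ⟪(r : E d), cv a b β⟫ < 0
      · exact Or.inl ⟨h1, hβ'⟩
      · exact Or.inr ⟨not_lt.mp hβ', h2⟩
    have hdisj : Disjoint (K a b 0 β \ {r : S d | ⟪(r : E d), a⟫ = 0}) (K a b β γ) := by
      rw [Set.disjoint_left]
      rintro r ⟨⟨_, h2⟩, _⟩ ⟨h3, _⟩
      exact absurd h3 (not_le.mpr h2)
    refine le_antisymm ?_ ?_
    · exact (measure_mono hsub).trans (measure_union_le _ _)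
    · calc μ (K a b 0 β) + μ (K a b β γ)
          = μ (K a b 0 β \ {r : S d | ⟪(r : E d), a⟫ = 0}) + μ (K a b β γ) := by
            rw [measure_diff_null hN]
        _ = μ ((K a b 0 β \ {r : S d | ⟪(r : E d), a⟫ = 0}) ∪ K a b β γ) :=
            (measure_union hdisj (K_meas a b β γ)).symm
        _ ≤ μ (K a b 0 γ) :=
            measure_mono (Set.union_subset (incl1 β γ hβ hβγ hγ) (incl2 β γ hβ hβγ hγ))
  have hK00 : μ (K a b 0 0) = 0 := by
    convert measure_empty (μ := μ)
    ext r
    simp only [K, Set.mem_setOf_eq, Set.mem_empty_iff_false, iff_false]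
    rintro ⟨h1, h2⟩
    exact absurd h1 (not_le.mpr h2)
  -- additivity including endpoints
  have hgadd : ∀ β γ : ℝ, 0 ≤ β → β ≤ γ → γ ≤ Real.pi →
      μ (K a b 0 γ) = μ (K a b 0 β) + μ (K a b 0 (γ - β)) := by
    intro β γ hβ hβγ hγ
    rcases eq_or_lt_of_le hβ with hβ0 | hβ0
    · rw [← hβ0, hK00, sub_zero, zero_add]
    · rcases eq_or_lt_of_le hβγ with hβγ0 | hβγ0
      · rw [hβγ0, sub_self, hK00, add_zero]
      · rw [hadd β γ hβ0 hβγ0 hγ, K_rot μ hinv hd ha hb hab β γ]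
  have hgmono : ∀ β γ : ℝ, 0 ≤ β → β ≤ γ → γ ≤ Real.pi →
      μ (K a b 0 β) ≤ μ (K a b 0 γ) := by
    intro β γ hβ hβγ hγ
    rw [hgadd β γ hβ hβγ hγ]
    exact le_self_add
  -- the value at π
  have hKpi : K a b 0 Real.pi = {r : S d | 0 < ⟪(r : E d), a⟫} := by
    ext r
    simp only [K, Set.mem_setOf_eq, cv_zero, cv_pi, inner_neg_right, neg_lt, neg_zero]
    constructor
    · rintro ⟨h1, h2⟩; exact h2
    · intro h; exact ⟨le_of_lt h, h⟩
  have hneg : μ {r : S d | ⟪(r : E d), a⟫ < 0} = μ {r : S d | 0 < ⟪(r : E d), a⟫} := by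
    obtain ⟨f, hf⟩ := exists_map_cv hd ha hb hab (by rw [norm_neg]; exact ha)
      (by rw [norm_neg]; exact hb) (by rw [inner_neg_neg]; exact hab)
    have h := inv_pos μ hinv f a
    have hfa : f a = -a := by
      have h0' := hf 0
      rw [cv_zero, cv_zero] at h0'
      exact h0'
    rw [hfa] at h
    have hset : {r : S d | ⟪(r : E d), a⟫ < 0} = {r : S d | 0 < ⟪(r : E d), -a⟫} := by
      ext r
      simp only [Set.mem_setOf_eq, inner_neg_right]
      exact neg_pos.symm
    rw [hset]
    exact h
  have htotal : μ {r : S d | 0 < ⟪(r : E d), a⟫} + μ {r : S d | ⟪(r : E d), a⟫ < 0} = 1 := by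
    have hcompl : {r : S d | 0 < ⟪(r : E d), a⟫}ᶜ
        = {r : S d | ⟪(r : E d), a⟫ < 0} ∪ {r : S d | ⟪(r : E d), a⟫ = 0} := by
      ext r
      simp only [Set.mem_compl_iff, Set.mem_setOf_eq, not_lt, Set.mem_union]
      constructor
      · intro h
        exact h.lt_or_eq.imp (fun h' => h') (fun h' => h')
      · rintro (h | h)
        · exact le_of_lt h
        · exact le_of_eq h
    have hm1 : MeasurableSet {r : S d | 0 < ⟪(r : E d), a⟫} := (minner a) measurableSet_Ioi
    have h := measure_add_measure_compl (μ := μ) hm1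
    rw [hcompl, measure_univ] at h
    rw [← h]
    congr 1
    refine le_antisymm (measure_mono Set.subset_union_left) ?_
    calc μ ({r : S d | ⟪(r : E d), a⟫ < 0} ∪ {r : S d | ⟪(r : E d), a⟫ = 0})
        ≤ μ {r : S d | ⟪(r : E d), a⟫ < 0} + μ {r : S d | ⟪(r : E d), a⟫ = 0} :=
          measure_union_le _ _
      _ = μ {r : S d | ⟪(r : E d), a⟫ < 0} := by rw [hN, add_zero]
  have hgpi : μ (K a b 0 Real.pi) + μ (K a b 0 Real.pi) = 1 := by
    rw [hKpi]
    nth_rewrite 2 [← hneg]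
    exact htotal
  -- real-valued version
  set G : ℝ → ℝ := fun t => (μ (K a b 0 t)).toReal with hGdef
  have hGadd : ∀ β γ : ℝ, 0 ≤ β → β ≤ γ → γ ≤ Real.pi → G γ = G β + G (γ - β) := by
    intro β γ hβ hβγ hγ
    rw [hGdef]
    simp only
    rw [hgadd β γ hβ hβγ hγ, ENNReal.toReal_add (hfin _) (hfin _)]
  have hGmono : ∀ β γ : ℝ, 0 ≤ β → β ≤ γ → γ ≤ Real.pi → G β ≤ G γ := by
    intro β γ hβ hβγ hγ
    exact ENNReal.toReal_mono (hfin _) (hgmono β γ hβ hβγ hγ)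
  have hGpi : G Real.pi = 1 / 2 := by
    have h := congrArg ENNReal.toReal hgpi
    rw [ENNReal.toReal_add (hfin _) (hfin _), ENNReal.toReal_one] at h
    rw [hGdef]
    simp only
    linarith
  have hG0 : G 0 = 0 := by rw [hGdef]; simp only; rw [hK00]; simp
  -- G (k * (π / n)) = k * G (π / n)
  have hGmul : ∀ n : ℕ, 1 ≤ n → ∀ k : ℕ, k ≤ n →
      G (k * (Real.pi / n)) = k * G (Real.pi / n) := by
    intro n hn k
    induction k with
    | zero => intro _; simpa using hG0
    | succ k ihk =>
      intro hk
      have hn' : (0 : ℝ) < n := by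
        have : 0 < n := by omega
        exact_mod_cast this
      have hkn : (k : ℝ) + 1 ≤ (n : ℝ) := by exact_mod_cast hk
      have hx : (0 : ℝ) ≤ Real.pi / n := div_nonneg hpi.le (Nat.cast_nonneg n)
      have hnpi : (n : ℝ) * (Real.pi / n) = Real.pi := by field_simp
      have h1 : G ((k + 1 : ℕ) * (Real.pi / n))
          = G ((k : ℕ) * (Real.pi / n))
            + G ((k + 1 : ℕ) * (Real.pi / n) - (k : ℕ) * (Real.pi / n)) := by
        apply hGadd
        · exact mul_nonneg (Nat.cast_nonneg k) hx
        · push_cast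
          nlinarith [hx]
        · push_cast
          have h3 : ((k : ℝ) + 1) * (Real.pi / n) ≤ (n : ℝ) * (Real.pi / n) :=
            mul_le_mul_of_nonneg_right hkn hx
          linarith
      rw [h1, ihk (by omega)]
      have h2 : ((k + 1 : ℕ) : ℝ) * (Real.pi / n) - (k : ℕ) * (Real.pi / n)
          = Real.pi / n := by
        push_cast; ring
      rw [h2]
      push_cast
      ring
  -- value of G (π / n)
  have hGn : ∀ n : ℕ, 1 ≤ n → G (Real.pi / n) = 1 / (2 * n) := by
    intro n hn
    have hn' : (0 : ℝ) < n := by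
      have : 0 < n := by omega
      exact_mod_cast this
    have h := hGmul n hn n le_rfl
    rw [mul_div_cancel₀ Real.pi (by positivity : (n : ℝ) ≠ 0), hGpi] at h
    field_simp at h ⊢
    linarith
  -- squeeze
  have hGθ : G θ = θ / (2 * Real.pi) := by
    rcases eq_or_lt_of_le hπ with hθπ | hθπ
    · rw [hθπ, hGpi]
      field_simp
    · have key : ∀ n : ℕ, 1 ≤ n → |G θ - θ / (2 * Real.pi)| ≤ 1 / n := by
        intro n hn
        have hn' : (0 : ℝ) < n := by
          have : 0 < n := by omega
          exact_mod_cast this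
        set k : ℕ := ⌊θ * n / Real.pi⌋₊ with hkdef
        have hknn : (0 : ℝ) ≤ θ * n / Real.pi :=
          div_nonneg (mul_nonneg h0 (Nat.cast_nonneg n)) hpi.le
        have hk1 : (k : ℝ) ≤ θ * n / Real.pi := Nat.floor_le hknn
        have hk2 : θ * n / Real.pi < (k : ℝ) + 1 := Nat.lt_floor_add_one _
        have hkn : k < n := by
          have hq : θ * n / Real.pi < n := by
            rw [div_lt_iff₀ hpi]
            nlinarith
          have hq2 : (k : ℝ) < n := lt_of_le_of_lt hk1 hq
          exact_mod_cast hq2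
        have hdiv : (0 : ℝ) < Real.pi / n := div_pos hpi hn'
        have heq : (θ * n / Real.pi) * (Real.pi / n) = θ := by field_simp
        have hnπ : (n : ℝ) * (Real.pi / n) = Real.pi := by field_simp
        have hlow : (k : ℝ) * (Real.pi / n) ≤ θ := by
          have h := mul_le_mul_of_nonneg_right hk1 hdiv.le
          rw [heq] at h
          exact h
        have hhigh : θ ≤ ((k : ℝ) + 1) * (Real.pi / n) := by
          have h := mul_le_mul_of_nonneg_right hk2.le hdiv.le
          rw [heq] at h
          exact h
        have hkn' : (k : ℝ) + 1 ≤ (n : ℝ) := by exact_mod_cast hkn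
        have hhπ : ((k : ℝ) + 1) * (Real.pi / n) ≤ Real.pi := by
          have h := mul_le_mul_of_nonneg_right hkn' hdiv.le
          rw [hnπ] at h
          exact h
        have hcast : ((k + 1 : ℕ) : ℝ) = (k : ℝ) + 1 := by push_cast; ring
        have hb1 : G ((k : ℕ) * (Real.pi / n)) ≤ G θ :=
          hGmono _ _ (mul_nonneg (Nat.cast_nonneg k) hdiv.le) hlow (le_of_lt hθπ)
        have hb2 : G θ ≤ G (((k : ℝ) + 1) * (Real.pi / n)) :=
          hGmono _ _ h0 hhigh hhπ
        rw [hGmul n hn k (le_of_lt hkn), hGn n hn] at hb1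
        have hGm2 := hGmul n hn (k + 1) hkn
        rw [hcast, hGn n hn] at hGm2
        rw [hGm2] at hb2
        have hk1' : (k : ℝ) * Real.pi ≤ θ * n := by
          rw [le_div_iff₀ hpi] at hk1
          linarith
        have hk2' : θ * n < ((k : ℝ) + 1) * Real.pi := by
          rw [div_lt_iff₀ hpi] at hk2
          linarith
        have hn2 : (0 : ℝ) < 2 * n := by linarith
        have hc1 : (k : ℝ) / (2 * n) ≤ θ / (2 * Real.pi) := by
          rw [div_le_div_iff₀ hn2 (by positivity)]
          nlinarith
        have hc2 : θ / (2 * Real.pi) ≤ ((k : ℝ) + 1) / (2 * n) := by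
          rw [div_le_div_iff₀ (by positivity) hn2]
          nlinarith
        have e1 : (k : ℝ) * (1 / (2 * n)) = (k : ℝ) / (2 * n) := by ring
        have e2 : ((k : ℝ) + 1) * (1 / (2 * n)) = ((k : ℝ) + 1) / (2 * n) := by ring
        have hgap : ((k : ℝ) + 1) / (2 * n) - (k : ℝ) / (2 * n) = 1 / (2 * n) := by
          rw [div_sub_div_same]
          norm_num
        have hhalf : (1 : ℝ) / (2 * n) ≤ 1 / n := by
          rw [div_le_div_iff₀ hn2 hn']
          nlinarith
        rw [abs_le]
        constructor
        · linarith
        · linarith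
      by_contra hne
      have habs : 0 < |G θ - θ / (2 * Real.pi)| := by
        rw [abs_pos]
        intro h
        exact hne (by linarith)
      obtain ⟨n, hn⟩ := exists_nat_one_div_lt habs
      have hkey := key (n + 1) (by omega)
      push_cast at hkey hn
      linarith
  have hfinal : μ (K a b 0 θ) = ENNReal.ofReal (G θ) := by
    rw [hGdef]
    simp only
    rw [ENNReal.ofReal_toReal (hfin _)]
  rw [hfinal, hGθ]

end Wedge
end Null
end GW

theorem gw_hyperplane_separation_probability (d : ℕ) (hd : 2 ≤ d)
    (μ : Measure (sphere (0 : EuclideanSpace ℝ (Fin d)) 1))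
    [IsProbabilityMeasure μ]
    (hinv : ∀ f : EuclideanSpace ℝ (Fin d) ≃ₗᵢ[ℝ] EuclideanSpace ℝ (Fin d),
      Measure.map
        (fun x : sphere (0 : EuclideanSpace ℝ (Fin d)) 1 =>
          (⟨f x, by
            simp [mem_sphere_zero_iff_norm, f.norm_map, x.2]⟩ :
              sphere (0 : EuclideanSpace ℝ (Fin d)) 1)) μ = μ)
    (u v : EuclideanSpace ℝ (Fin d)) (hu : ‖u‖ = 1) (hv : ‖v‖ = 1) :
    μ {r : sphere (0 : EuclideanSpace ℝ (Fin d)) 1 |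
        sgn ⟪(r : EuclideanSpace ℝ (Fin d)), u⟫ ≠ sgn ⟪(r : EuclideanSpace ℝ (Fin d)), v⟫}
      = ENNReal.ofReal (Real.arccos ⟪u, v⟫ / Real.pi) := by
  classical
  have hpi := Real.pi_pos
  have hinv' : ∀ f : GW.E d ≃ₗᵢ[ℝ] GW.E d, Measure.map (GW.rotS f) μ = μ := fun f => hinv f
  set t : ℝ := ⟪u, v⟫ with htdef
  have hcs : |t| ≤ 1 := by
    have h := abs_real_inner_le_norm u v
    rw [hu, hv] at h
    simpa using h
  have ht1 : -1 ≤ t := by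
    have := abs_le.mp hcs
    exact this.1
  have ht2 : t ≤ 1 := (abs_le.mp hcs).2
  set θ : ℝ := Real.arccos t with hθdef
  have hθ0 : 0 ≤ θ := Real.arccos_nonneg t
  have hθπ : θ ≤ Real.pi := Real.arccos_le_pi t
  have hcos : Real.cos θ = t := Real.cos_arccos ht1 ht2
  have hsin : Real.sin θ = Real.sqrt (1 - t ^ 2) := Real.sin_arccos t
  have huu : ⟪u, u⟫ = (1 : ℝ) := by
    rw [real_inner_self_eq_norm_mul_norm, hu]; ring
  -- find the orthonormal companion w
  obtain ⟨w, hw1, hw2, hvw⟩ : ∃ w : GW.E d, ‖w‖ = 1 ∧ ⟪u, w⟫ = 0 ∧ v = GW.cv u w θ := by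
    set z : GW.E d := v - t • u with hzdef
    have hz : ⟪u, z⟫ = 0 := by
      rw [hzdef, inner_sub_right, real_inner_smul_right, huu]
      simp [htdef]
    have hnz : ‖z‖ ^ 2 = 1 - t ^ 2 := by
      have h : ⟪z, z⟫ = ‖z‖ * ‖z‖ := by rw [real_inner_self_eq_norm_mul_norm]
      have hexp : ⟪z, z⟫ = 1 - t ^ 2 := by
        rw [hzdef]
        simp only [inner_sub_left, inner_sub_right, real_inner_smul_left,
          real_inner_smul_right, huu]
        have hvv : ⟪v, v⟫ = (1 : ℝ) := by
          rw [real_inner_self_eq_norm_mul_norm, hv]; ring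
        have hvu : ⟪v, u⟫ = t := by rw [real_inner_comm]
        rw [hvv, hvu, ← htdef]
        ring
      nlinarith [h, hexp]
    by_cases hz0 : z = 0
    · -- v = t • u, degenerate case: pick any unit vector orthogonal to u
      have hvtu : v = t • u := by
        have := hzdef ▸ hz0
        rwa [sub_eq_zero] at this
      have hON : Orthonormal ℝ (fun _ : Fin 1 => u) := by
        rw [orthonormal_iff_ite]
        intro i j
        fin_cases i; fin_cases j
        simp [huu, hu]
      obtain ⟨b, hb⟩ := GW.exists_onb_extending (by omega : 1 ≤ d) (fun _ => u) hON
      refine ⟨b ⟨1, by omega⟩, b.orthonormal.1 _, ?_, ?_⟩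
      · have h := hb 0
        rw [← h]
        exact b.orthonormal.2 (by simp [Fin.ext_iff])
      · have hsin0 : Real.sin θ = 0 := by
          rw [hsin]
          have : 1 - t ^ 2 = 0 := by
            have habs : t ^ 2 = 1 := by
              have hz2 : ‖z‖ ^ 2 = 0 := by rw [hz0]; simp
              nlinarith [hnz]
            linarith
          rw [this, Real.sqrt_zero]
        rw [GW.cv, hsin0, hcos, zero_smul, add_zero, hvtu]
    · -- generic case
      have hnzpos : 0 < ‖z‖ := norm_pos_iff.mpr hz0
      refine ⟨‖z‖⁻¹ • z, ?_, ?_, ?_⟩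
      · rw [norm_smul, norm_inv, norm_norm, inv_mul_cancel₀ hnzpos.ne']
      · rw [real_inner_smul_right, hz, mul_zero]
      · have hsinz : Real.sin θ = ‖z‖ := by
          rw [hsin]
          rw [show (1 : ℝ) - t ^ 2 = ‖z‖ ^ 2 from by linarith [hnz]]
          exact Real.sqrt_sq hnzpos.le
        rw [GW.cv, hcos, hsinz, smul_smul, mul_inv_cancel₀ hnzpos.ne', one_smul,
          hzdef]
        abel
    -- event decomposition
  have hcv0 : GW.cv u w 0 = u := GW.cv_zero u w
  have hA : GW.K u w 0 θ = {r : sphere (0 : EuclideanSpace ℝ (Fin d)) 1 |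
      0 ≤ ⟪(r : GW.E d), u⟫ ∧ ⟪(r : GW.E d), v⟫ < 0} := by
    rw [GW.K, hcv0, ← hvw]
  have hcv2π : GW.cv u w (2 * Real.pi) = u := by
    rw [GW.cv, Real.cos_two_pi, Real.sin_two_pi]
    simp
  have hB : GW.K u w θ (2 * Real.pi) = {r : sphere (0 : EuclideanSpace ℝ (Fin d)) 1 |
      ⟪(r : GW.E d), u⟫ < 0 ∧ 0 ≤ ⟪(r : GW.E d), v⟫} := by
    rw [GW.K, hcv2π, ← hvw]
    ext r
    simp only [Set.mem_setOf_eq]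
    tauto
  have hμA : μ (GW.K u w 0 θ) = ENNReal.ofReal (θ / (2 * Real.pi)) :=
    GW.measure_wedge μ hinv' hd hu hw1 hw2 hθ0 hθπ
  have hμB : μ (GW.K u w θ (2 * Real.pi)) = ENNReal.ofReal (θ / (2 * Real.pi)) := by
    rw [GW.K_rot μ hinv' hd hu hw1 hw2 θ (2 * Real.pi)]
    have hset : GW.K u w 0 (2 * Real.pi - θ) = GW.K u w 0 (-θ) := by
      have hcveq : GW.cv u w (2 * Real.pi - θ) = GW.cv u w (-θ) := by
        rw [GW.cv, GW.cv, Real.cos_sub, Real.sin_sub, Real.cos_two_pi, Real.sin_two_pi,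
          Real.cos_neg, Real.sin_neg]
        ring_nf
      rw [GW.K, GW.K, hcveq]
    rw [hset, GW.K_refl μ hinv' hd hu hw1 hw2 θ]
    exact GW.measure_wedge μ hinv' hd hu hw1 hw2 hθ0 hθπ
  have hev : {r : sphere (0 : EuclideanSpace ℝ (Fin d)) 1 |
        sgn ⟪(r : EuclideanSpace ℝ (Fin d)), u⟫ ≠ sgn ⟪(r : EuclideanSpace ℝ (Fin d)), v⟫}
      = GW.K u w 0 θ ∪ GW.K u w θ (2 * Real.pi) := by
    rw [hA, hB]
    ext r
    simp only [Set.mem_setOf_eq, Set.mem_union]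
    constructor
    · intro hne
      by_cases hx : 0 ≤ ⟪(r : GW.E d), u⟫ <;> by_cases hy : 0 ≤ ⟪(r : GW.E d), v⟫
      · exact absurd (by simp only [sgn, if_pos hx, if_pos hy]) hne
      · exact Or.inl ⟨hx, not_le.mp hy⟩
      · exact Or.inr ⟨not_le.mp hx, hy⟩
      · exact absurd (by simp only [sgn, if_neg hx, if_neg hy]) hne
    · rintro (⟨hx, hy⟩ | ⟨hx, hy⟩)
      · simp only [sgn, if_pos hx, if_neg (not_le.mpr hy)]
        norm_num
      · simp only [sgn, if_neg (not_le.mpr hx), if_pos hy]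
        norm_num
  have hdisj : Disjoint (GW.K u w 0 θ) (GW.K u w θ (2 * Real.pi)) := by
    rw [hA, hB, Set.disjoint_left]
    rintro r ⟨h1, _⟩ ⟨h2, _⟩
    exact absurd h1 (not_le.mpr h2)
  rw [hev, measure_union hdisj]
  · rw [hμA, hμB, ← ENNReal.ofReal_add (by positivity) (by positivity)]
    congr 1
    field_simp
    ring
  · exact GW.K_meas u w θ (2 * Real.pi)
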